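/- Let k be a field, let P = k[x₁,…,xₙ], let 𝓕 ⊆ P be a finite set of nonzero polynomials, and let 𝓕^top = { f^top : f ∈ 𝓕 } be the set of their highest-degree homogeneous components (f^top being the homogeneous component of f of degree equal to the total degree of f). If the quotient P/(𝓕^top) by the ideal generated by 𝓕^top is a finite-dimensional k-vector space of dimension d, then the quotient P/(𝓕) by the ideal generated by 𝓕 is a finite-dimensional k-vector space of dimension at most d. -/

import Mathlib

open MvPolynomial

/-- Subtracting the top homogeneous component strictly drops total degree. -/
lemma aux_sub_top_deg {k : Type*} [CommRing k] {n : ℕ} (f : MvPolynomial (Fin n) k)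
    (h : f - homogeneousComponent f.totalDegree f ≠ 0) :
    (f - homogeneousComponent f.totalDegree f).totalDegree < f.totalDegree := by
  by_cases h0 : f.totalDegree = 0
  · exfalso
    apply h
    have hhom : f.IsHomogeneous 0 := isHomogeneous_of_totalDegree_zero (Fin n) h0
    have : homogeneousComponent f.totalDegree f = f := by
      rw [h0, homogeneousComponent_of_mem ((mem_homogeneousSubmodule 0 f).mpr hhom)]
      simp
    rw [this, sub_self]
  have hepos : 0 < f.totalDegree := Nat.pos_of_ne_zero h0
  have hsupp : ∀ d ∈ (f - homogeneousComponent f.totalDegree f).support,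
      (d.sum fun _ m => m) < f.totalDegree := by
    intro d hd
    have hcoeff : coeff d (f - homogeneousComponent f.totalDegree f) ≠ 0 :=
      mem_support_iff.mp hd
    have h1 : d.degree ≠ f.totalDegree := by
      intro hde
      apply hcoeff
      simp [coeff_sub, coeff_homogeneousComponent, hde]
    have h2 : coeff d f ≠ 0 := by
      intro hcf
      apply hcoeff
      simp [coeff_sub, coeff_homogeneousComponent, hcf]
    have h3 : (d.sum fun _ m => m) ≤ f.totalDegree := le_totalDegree (mem_support_iff.mpr h2)
    have hdeg : d.degree = d.sum fun _ m => m := by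
      simp [Finsupp.degree, Finsupp.sum]
      rfl
    rw [hdeg] at h1
    exact lt_of_le_of_ne h3 h1
  exact (Finset.sup_lt_iff (show ⊥ < f.totalDegree from hepos)).mpr hsupp

set_option maxHeartbeats 1000000 in
set_option synthInstance.maxHeartbeats 100000 in
/-- Main auxiliary statement. -/
theorem aux_main {k : Type*} [Field k] {n : ℕ} (𝓕 : Finset (MvPolynomial (Fin n) k))
    (J : Ideal (MvPolynomial (Fin n) k))
    (hJ : J = Ideal.span ((fun f : MvPolynomial (Fin n) k =>
      MvPolynomial.homogeneousComponent f.totalDegree f) '' (𝓕 : Set (MvPolynomial (Fin n) k))))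
    [htop : FiniteDimensional k (MvPolynomial (Fin n) k ⧸ J)] :
    FiniteDimensional k
      (MvPolynomial (Fin n) k ⧸ Ideal.span ((𝓕 : Set (MvPolynomial (Fin n) k)))) ∧
    Module.finrank k
      (MvPolynomial (Fin n) k ⧸ Ideal.span ((𝓕 : Set (MvPolynomial (Fin n) k)))) ≤
      Module.finrank k (MvPolynomial (Fin n) k ⧸ J) := by
  classical
  set I : Ideal (MvPolynomial (Fin n) k) := Ideal.span (𝓕 : Set (MvPolynomial (Fin n) k)) with hI
  set M : Set (MvPolynomial (Fin n) k) :=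
    Set.range (fun s : (Fin n →₀ ℕ) => (monomial s (1 : k))) with hM
  have hMspan : Submodule.span k M = ⊤ := by
    rw [Submodule.eq_top_iff']
    intro p
    rw [p.as_sum]
    refine Submodule.sum_mem _ fun v hv => ?_
    have : (monomial v (coeff v p)) = (coeff v p) • monomial v (1 : k) := by
      rw [smul_monomial, smul_eq_mul, mul_one]
    rw [this]
    exact Submodule.smul_mem _ _ (Submodule.subset_span ⟨v, rfl⟩)
  set πJ : MvPolynomial (Fin n) k →ₗ[k] (MvPolynomial (Fin n) k ⧸ J) :=
    (Ideal.Quotient.mkₐ k J).toLinearMap with hπJ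
  have hπJsurj : Function.Surjective πJ := Ideal.Quotient.mkₐ_surjective k J
  have himg : Submodule.span k (πJ '' M) = ⊤ := by
    rw [Submodule.span_image, hMspan, Submodule.map_top, LinearMap.range_eq_top.mpr hπJsurj]
  obtain ⟨b, hbM, hbspan, hbind⟩ := exists_linearIndependent k (πJ '' M)
  rw [himg] at hbspan
  have hbfin : b.Finite := hbind.setFinite
  haveI : Fintype b := hbfin.fintype
  have hcardb : Fintype.card b ≤ Module.finrank k (MvPolynomial (Fin n) k ⧸ J) :=
    hbind.fintype_card_le_finrank
  have hlift : ∀ x : b, ∃ y, y ∈ M ∧ πJ y = x := fun x => hbM x.2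
  choose g hgM hgπ using hlift
  set B : Set (MvPolynomial (Fin n) k) := Set.range g with hB
  have hBfin : B.Finite := Set.finite_range g
  set S : Submodule k (MvPolynomial (Fin n) k) :=
    Submodule.span k B ⊔ (Submodule.restrictScalars k I) with hS
  have hIS : ∀ x ∈ I, x ∈ S := fun x hx => Submodule.mem_sup_right hx
  have hcomp_span : ∀ (m : ℕ) (q : MvPolynomial (Fin n) k), q ∈ Submodule.span k B →
      homogeneousComponent m q ∈ Submodule.span k B := by
    intro m q hq
    have hle : Submodule.map (homogeneousComponent m (σ := Fin n) (R := k))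
        (Submodule.span k B) ≤ Submodule.span k B := by
      rw [Submodule.map_span, Submodule.span_le]
      rintro _ ⟨x, ⟨y, rfl⟩, rfl⟩
      obtain ⟨s, hs⟩ := hgM y
      have hhom : (g y).IsHomogeneous s.degree := by
        rw [← hs]; exact isHomogeneous_monomial 1 rfl
      rw [homogeneousComponent_of_mem ((mem_homogeneousSubmodule _ _).mpr hhom)]
      split
      · exact Submodule.subset_span ⟨y, rfl⟩
      · exact Submodule.zero_mem _
    exact hle ⟨q, hq, rfl⟩
  have hBJ : ∀ p : MvPolynomial (Fin n) k,
      p ∈ Submodule.span k B ⊔ (Submodule.restrictScalars k J) := by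
    intro p
    have hb_sub : b ⊆ πJ '' B := fun x hx => ⟨g ⟨x, hx⟩, ⟨⟨x, hx⟩, rfl⟩, hgπ ⟨x, hx⟩⟩
    have hspanB : Submodule.span k (πJ '' B) = ⊤ :=
      eq_top_iff.mpr (hbspan ▸ Submodule.span_mono hb_sub)
    have hmem : πJ p ∈ Submodule.span k (πJ '' B) := by rw [hspanB]; trivial
    rw [Submodule.span_image] at hmem
    obtain ⟨q, hq, hqe⟩ := hmem
    have hpq : p - q ∈ J := by
      have : Ideal.Quotient.mk J q = Ideal.Quotient.mk J p := by
        simpa [hπJ, Ideal.Quotient.mkₐ_eq_mk] using hqe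
      exact Ideal.Quotient.eq.mp this.symm
    have hpe : p = q + (p - q) := by ring
    rw [hpe]
    exact Submodule.add_mem _ (Submodule.mem_sup_left hq) (Submodule.mem_sup_right hpq)
  have key : ∀ m : ℕ, ∀ p : MvPolynomial (Fin n) k, p.IsHomogeneous m → p ∈ S := by
    intro m
    induction m using Nat.strong_induction_on with
    | _ m IH =>
      intro p hp
      obtain ⟨q, hq, j, hj, hpqj⟩ := Submodule.mem_sup.mp (hBJ p)
      have hpcomp : p = homogeneousComponent m p := by
        rw [homogeneousComponent_of_mem ((mem_homogeneousSubmodule _ _).mpr hp)]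
        simp
      rw [hpcomp, ← hpqj, map_add]
      refine Submodule.add_mem _ (Submodule.mem_sup_left (hcomp_span m q hq)) ?_
      have hj' : j ∈ Submodule.span (MvPolynomial (Fin n) k)
          ((fun f : MvPolynomial (Fin n) k =>
            MvPolynomial.homogeneousComponent f.totalDegree f) ''
            (𝓕 : Set (MvPolynomial (Fin n) k))) := by
        rw [Ideal.submodule_span_eq, ← hJ]; exact hj
      obtain ⟨c, hcsupp, hcsum⟩ := Submodule.mem_span_set.mp hj'
      rw [← hcsum, Finsupp.sum, map_sum]
      refine Submodule.sum_mem _ fun t ht => ?_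
      obtain ⟨f, hf𝓕, hft'⟩ := hcsupp ht
      have hft : homogeneousComponent f.totalDegree f = t := hft'
      rw [smul_eq_mul]
      have hrdecomp : (c t) * t = ∑ i ∈ Finset.range ((c t).totalDegree + 1),
          (homogeneousComponent i (c t)) * t := by
        conv_lhs => rw [← sum_homogeneousComponent (c t)]
        rw [Finset.sum_mul]
      rw [hrdecomp, map_sum]
      refine Submodule.sum_mem _ fun i _ => ?_
      have hut : ((homogeneousComponent i (c t)) * t).IsHomogeneous (i + f.totalDegree) := by
        have h1 : (homogeneousComponent i (c t)).IsHomogeneous i :=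
          homogeneousComponent_isHomogeneous i (c t)
        have h2 : t.IsHomogeneous f.totalDegree := by
          rw [← hft]; exact homogeneousComponent_isHomogeneous _ f
        exact h1.mul h2
      rw [homogeneousComponent_of_mem ((mem_homogeneousSubmodule _ _).mpr hut)]
      split
      · rename_i hmie
        set u : MvPolynomial (Fin n) k := homogeneousComponent i (c t) with hu
        have huf : u * f ∈ S := hIS _ (Ideal.mul_mem_left I u (Ideal.subset_span hf𝓕))
        have heq : u * t = u * f - u * (f - t) := by ring
        rw [heq]
        refine Submodule.sub_mem _ huf ?_
        by_cases hft0 : f - t = 0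
        · rw [hft0, mul_zero]; exact Submodule.zero_mem _
        · have hdeg : (f - t).totalDegree < f.totalDegree := by
            have := aux_sub_top_deg f (by rw [hft]; exact hft0)
            rw [hft] at this
            exact this
          have hvdeg : (u * (f - t)).totalDegree < m := by
            have hud : u.totalDegree ≤ i := by
              by_cases hu0 : u = 0
              · simp [hu0]
              · exact (homogeneousComponent_isHomogeneous i (c t)).totalDegree_le
            have hmul := totalDegree_mul u (f - t)
            omega
          have hvsum : u * (f - t) = ∑ l ∈ Finset.range ((u * (f - t)).totalDegree + 1),
              homogeneousComponent l (u * (f - t)) :=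
            (sum_homogeneousComponent _).symm
          rw [hvsum]
          refine Submodule.sum_mem _ fun l hl => ?_
          have hlm : l < m := by
            have := Finset.mem_range.mp hl
            omega
          exact IH l hlm _ (homogeneousComponent_isHomogeneous l _)
      · exact Submodule.zero_mem _
  have hStop : S = ⊤ := by
    rw [Submodule.eq_top_iff']
    intro p
    rw [← sum_homogeneousComponent p]
    exact Submodule.sum_mem _ fun i _ => key i _ (homogeneousComponent_isHomogeneous i p)
  set πI : MvPolynomial (Fin n) k →ₗ[k] (MvPolynomial (Fin n) k ⧸ I) :=
    (Ideal.Quotient.mkₐ k I).toLinearMap with hπI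
  have hπIsurj : Function.Surjective πI := Ideal.Quotient.mkₐ_surjective k I
  have hspanBI : Submodule.span k (πI '' B) = ⊤ := by
    rw [Submodule.span_image, eq_top_iff]
    intro x _
    obtain ⟨p, rfl⟩ := hπIsurj x
    have hpS : p ∈ S := hStop ▸ Submodule.mem_top
    obtain ⟨q, hq, y, hy, hpqy⟩ := Submodule.mem_sup.mp hpS
    have hπy : πI y = 0 := by
      simp only [hπI, AlgHom.toLinearMap_apply, Ideal.Quotient.mkₐ_eq_mk]
      exact Ideal.Quotient.eq_zero_iff_mem.mpr hy
    have hpiq : πI p = πI q := by rw [← hpqy, map_add, hπy, add_zero]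
    rw [hpiq]
    exact Submodule.mem_map_of_mem hq
  have hfin : FiniteDimensional k (MvPolynomial (Fin n) k ⧸ I) := by
    have h1 : FiniteDimensional k (Submodule.span k (πI '' B)) :=
      FiniteDimensional.span_of_finite k (hBfin.image πI)
    rw [hspanBI] at h1
    exact Module.Finite.equiv (Submodule.topEquiv)
  refine ⟨hfin, ?_⟩
  haveI : Fintype (πI '' B) := (hBfin.image πI).fintype
  have h1 : Module.finrank k (MvPolynomial (Fin n) k ⧸ I) ≤ (πI '' B).toFinset.card := by
    rw [← finrank_top k (MvPolynomial (Fin n) k ⧸ I), ← hspanBI]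
    exact finrank_span_le_card _
  have h2 : (πI '' B).toFinset.card ≤ Fintype.card b := by
    have hsub : (πI '' B).toFinset ⊆ Finset.image (fun x : b => πI (g x)) Finset.univ := by
      intro z hz
      rw [Set.mem_toFinset] at hz
      obtain ⟨p, ⟨y, rfl⟩, rfl⟩ := hz
      exact Finset.mem_image.mpr ⟨y, Finset.mem_univ _, rfl⟩
    calc (πI '' B).toFinset.card ≤ (Finset.image (fun x : b => πI (g x)) Finset.univ).card :=
          Finset.card_le_card hsub
      _ ≤ Finset.univ.card := Finset.card_image_le
      _ = Fintype.card b := Finset.card_univ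
  exact le_trans (le_trans h1 h2) hcardb

theorem finrank_quotient_le_finrank_top_components {k : Type*} [Field k] (n : ℕ)
    (𝓕 : Finset (MvPolynomial (Fin n) k)) (h0 : ∀ f ∈ 𝓕, f ≠ 0) (d : ℕ)
    (htop : FiniteDimensional k
      (MvPolynomial (Fin n) k ⧸
        Ideal.span ((fun f : MvPolynomial (Fin n) k =>
          MvPolynomial.homogeneousComponent f.totalDegree f) '' (𝓕 : Set (MvPolynomial (Fin n) k)))))
    (hd : Module.finrank k
      (MvPolynomial (Fin n) k ⧸
        Ideal.span ((fun f : MvPolynomial (Fin n) k =>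
          MvPolynomial.homogeneousComponent f.totalDegree f) '' (𝓕 : Set (MvPolynomial (Fin n) k)))) = d) :
    FiniteDimensional k
      (MvPolynomial (Fin n) k ⧸ Ideal.span (𝓕 : Set (MvPolynomial (Fin n) k))) ∧
    Module.finrank k
      (MvPolynomial (Fin n) k ⧸ Ideal.span (𝓕 : Set (MvPolynomial (Fin n) k))) ≤ d := by
  obtain ⟨h1, h2⟩ := aux_main 𝓕 _ rfl
  exact ⟨h1, hd ▸ h2⟩
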